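/- Let (F,G) be a cross-Sperner pair of families of subsets of [n] such that for every cross-Sperner pair (F',G') of families of subsets of [n] one has |F'| + |G'| ≤ |F| + |G| (i.e., (F,G) maximizes the sum of sizes). Then both F and G are convex families, i.e., whenever F₁, F₂ ∈ F and F₁ ⊆ A ⊆ F₂ we have A ∈ F, and likewise for G. -/

import Mathlib

/-- A pair of families `(𝓕, 𝓖)` is cross-Sperner if there is no pair
`F ∈ 𝓕`, `G ∈ 𝓖` with `F ⊆ G` or `G ⊆ F`. -/
def CrossSperner (𝓕 𝓖 : Finset (Finset ℕ)) : Prop :=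
  ∀ F ∈ 𝓕, ∀ G ∈ 𝓖, ¬ F ⊆ G ∧ ¬ G ⊆ F

/-- A family `𝓗` is convex if `H₁ ⊆ A ⊆ H₂` with `H₁, H₂ ∈ 𝓗` implies `A ∈ 𝓗`. -/
def ConvexFamily (𝓗 : Finset (Finset ℕ)) : Prop :=
  ∀ H₁ ∈ 𝓗, ∀ H₂ ∈ 𝓗, ∀ A : Finset ℕ, H₁ ⊆ A → A ⊆ H₂ → A ∈ 𝓗

theorem cross_sperner_maximal_convex (n : ℕ) (𝓕 𝓖 : Finset (Finset ℕ))
    (h𝓕 : 𝓕 ⊆ (Finset.Icc 1 n).powerset) (h𝓖 : 𝓖 ⊆ (Finset.Icc 1 n).powerset)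
    (h : CrossSperner 𝓕 𝓖)
    (hmax : ∀ 𝓕' 𝓖' : Finset (Finset ℕ),
      𝓕' ⊆ (Finset.Icc 1 n).powerset → 𝓖' ⊆ (Finset.Icc 1 n).powerset →
      CrossSperner 𝓕' 𝓖' → 𝓕'.card + 𝓖'.card ≤ 𝓕.card + 𝓖.card) :
    ConvexFamily 𝓕 ∧ ConvexFamily 𝓖 := by
  constructor
  · intro H₁ hH₁ H₂ hH₂ A hA₁ hA₂
    by_contra hA
    have hsub : insert A 𝓕 ⊆ (Finset.Icc 1 n).powerset := by
      intro X hX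
      rcases Finset.mem_insert.mp hX with rfl | hX
      · exact Finset.mem_powerset.mpr (hA₂.trans (Finset.mem_powerset.mp (h𝓕 hH₂)))
      · exact h𝓕 hX
    have hcs : CrossSperner (insert A 𝓕) 𝓖 := by
      intro F hF G hG
      rcases Finset.mem_insert.mp hF with rfl | hF
      · exact ⟨fun hc => (h H₁ hH₁ G hG).1 (hA₁.trans hc),
          fun hc => (h H₂ hH₂ G hG).2 (hc.trans hA₂)⟩
      · exact h F hF G hG
    have := hmax (insert A 𝓕) 𝓖 hsub h𝓖 hcs
    rw [Finset.card_insert_of_notMem hA] at this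
    omega
  · intro H₁ hH₁ H₂ hH₂ A hA₁ hA₂
    by_contra hA
    have hsub : insert A 𝓖 ⊆ (Finset.Icc 1 n).powerset := by
      intro X hX
      rcases Finset.mem_insert.mp hX with rfl | hX
      · exact Finset.mem_powerset.mpr (hA₂.trans (Finset.mem_powerset.mp (h𝓖 hH₂)))
      · exact h𝓖 hX
    have hcs : CrossSperner 𝓕 (insert A 𝓖) := by
      intro F hF G hG
      rcases Finset.mem_insert.mp hG with rfl | hG
      · exact ⟨fun hc => (h F hF H₂ hH₂).1 (hc.trans hA₂),
          fun hc => (h F hF H₁ hH₁).2 (hA₁.trans hc)⟩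
      · exact h F hF G hG
    have := hmax 𝓕 (insert A 𝓖) h𝓕 hsub hcs
    rw [Finset.card_insert_of_notMem hA] at this
    omega
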